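/- The map A on ℝ² defined by A(ε, δ) = (1 - ε/(1-δ), ε) has order 5: applying A five times to any point (ε, δ) with all intermediate points having δ ≠ 1 (so that the map is defined) returns the original point. -/

import Mathlib

/-- Vertex reflection of 3-dimensional generalized regular polytopes in the relative basis. -/
noncomputable def refA : ℝ × ℝ → ℝ × ℝ := fun p => (1 - p.1 / (1 - p.2), p.1)

theorem refA_order_five (ε δ : ℝ)
    (h : ∀ k < 5, (refA^[k] (ε, δ)).2 ≠ 1) :
    refA^[5] (ε, δ) = (ε, δ) := by
  have h0 := h 0 (by norm_num)
  have h1 := h 1 (by norm_num)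
  have h2 := h 2 (by norm_num)
  have h3 := h 3 (by norm_num)
  have h4 := h 4 (by norm_num)
  simp only [Function.iterate_succ, Function.iterate_zero, Function.comp_apply, id_eq, refA] at *
  have H0 : (1:ℝ) - δ ≠ 0 := sub_ne_zero.mpr (fun e => h0 e.symm)
  have H1 : (1:ℝ) - ε ≠ 0 := sub_ne_zero.mpr (fun e => h1 e.symm)
  have H2 : (1:ℝ) - (1 - ε / (1 - δ)) ≠ 0 := sub_ne_zero.mpr (fun e => h2 e.symm)
  have H3 : (1:ℝ) - (1 - (1 - ε / (1 - δ)) / (1 - ε)) ≠ 0 := sub_ne_zero.mpr (fun e => h3 e.symm)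
  have E : ε ≠ 0 := by intro e; apply H2; simp [e]
  have S : (1:ℝ) - δ - ε ≠ 0 := by
    intro e
    apply H3
    have hε : ε = 1 - δ := by linarith
    rw [hε, div_self H0]
    simp
  have D : δ ≠ 0 := by
    intro e
    apply h4
    rw [e, sub_zero, div_one, div_self H1]
    simp
  have S' : (1:ℝ) - ε - δ ≠ 0 := by intro e; exact S (by linarith)
  have s1 : refA (ε, δ) = ((1 - δ - ε) / (1 - δ), ε) := by
    simp only [refA]
    congr 1
    field_simp
  have s2 : refA ((1 - δ - ε) / (1 - δ), ε) = (ε * δ / ((1 - ε) * (1 - δ)), (1 - δ - ε) / (1 - δ)) := by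
    simp only [refA]
    congr 1
    field_simp
    try ring
  have s3 : refA (ε * δ / ((1 - ε) * (1 - δ)), (1 - δ - ε) / (1 - δ)) =
      ((1 - ε - δ) / (1 - ε), ε * δ / ((1 - ε) * (1 - δ))) := by
    simp only [refA]
    congr 1
    have : (1:ℝ) - (1 - δ - ε) / (1 - δ) = ε / (1 - δ) := by field_simp; try ring
    rw [this]
    field_simp
  have s4 : refA ((1 - ε - δ) / (1 - ε), ε * δ / ((1 - ε) * (1 - δ))) =
      (δ, (1 - ε - δ) / (1 - ε)) := by
    simp only [refA]
    congr 1
    have : (1:ℝ) - ε * δ / ((1 - ε) * (1 - δ)) = (1 - ε - δ) / ((1 - ε) * (1 - δ)) := by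
      field_simp; ring
    rw [this]
    field_simp
    ring
  have s5 : refA (δ, (1 - ε - δ) / (1 - ε)) = (ε, δ) := by
    simp only [refA]
    congr 1
    have : (1:ℝ) - (1 - ε - δ) / (1 - ε) = δ / (1 - ε) := by field_simp; try ring
    rw [this]
    field_simp
    ring
  show refA (refA (refA (refA (refA (ε, δ))))) = (ε, δ)
  rw [s1, s2, s3, s4, s5]
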